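/- Let k, n, ℓ be integers with 0 ≤ ℓ ≤ k−1, k ≥ 1, and 1 ≤ k−ℓ ≤ n/2. Define the planted distribution B(k, n, ℓ, 1/2) on bipartite graphs with left vertex set Fin k and right vertex set Fin n as follows: sample S : Fin k → Bool with each coordinate independently true with probability ℓ/k; sample P : Fin n → Bool with each coordinate independently true with probability (k−ℓ)/n; then, independently for each pair (u,v), include the edge (u,v) with probability 1 if S(u) and P(v) are both true, with probability (n/2 − (k−ℓ))/(n − (k−ℓ)) if S(u) is true and P(v) is false, and with probability 1/2 otherwise. For a finite set α of pairs (u,v), define χ_α = ∏_{(u,v)∈α} χ_{u,v}, where χ_{u,v} = 1 if (u,v) is an edge and −1 otherwise. Then for every finite nonempty set α of pairs, writing L for the number of distinct left vertices appearing in α and, for each right vertex v appearing in α, d_v for the number of pairs of α incident to v, one has E_{B(k,n,ℓ,1/2)}[χ_α] = (ℓ/k)^L · ∏_{v} [ (k−ℓ)/n + (1 − (k−ℓ)/n)·(−(k−ℓ)/(n−(k−ℓ)))^{d_v} ], where the product ranges over the distinct right vertices appearing in α. -/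

import Mathlib

open MeasureTheory

/-- The Bernoulli measure on `Bool` with success probability `x` (clamped to `[0,1]`;
for `x ∈ [0,1]` this is exactly the Bernoulli(`x`) measure). -/
noncomputable def bern (x : ℝ) : Measure Bool :=
  (PMF.bernoulli (min (Real.toNNReal x) 1) (min_le_right _ _)).toMeasure

instance (x : ℝ) : IsProbabilityMeasure (bern x) :=
  inferInstanceAs (IsProbabilityMeasure (PMF.toMeasure _))

/-- The planted distribution `B(k, n, ℓ, 1/2)` on bipartite graphs with left vertex set
`Fin k` and right vertex set `Fin n`: sample `S : Fin k → Bool` with independent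
Bernoulli(`ℓ/k`) coordinates and `P : Fin n → Bool` with independent
Bernoulli(`(k−ℓ)/n`) coordinates; then include each edge `(u,v)` independently with
probability `1` if `S u` and `P v`, probability `(n/2 − (k−ℓ))/(n − (k−ℓ))` if `S u`
and not `P v`, and probability `1/2` otherwise. -/
noncomputable def plantedModel (k n ℓ : ℕ) : Measure (Fin k × Fin n → Bool) :=
  (Measure.pi fun _ : Fin k => bern ((ℓ : ℝ) / k)).bind fun S =>
    (Measure.pi fun _ : Fin n => bern (((k : ℝ) - ℓ) / n)).bind fun P =>
      Measure.pi fun uv : Fin k × Fin n =>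
        bern (if S uv.1 then
                (if P uv.2 then 1
                 else ((n : ℝ) / 2 - ((k : ℝ) - ℓ)) / ((n : ℝ) - ((k : ℝ) - ℓ)))
              else 1 / 2)

lemma integral_bern {x : ℝ} (h0 : 0 ≤ x) (h1 : x ≤ 1) (f : Bool → ℝ) :
    ∫ b, f b ∂ bern x = x * f true + (1 - x) * f false := by
  have hx : min (Real.toNNReal x) 1 = Real.toNNReal x :=
    min_eq_left (Real.toNNReal_le_one.2 h1)
  have ht : (bern x {true}).toReal = x := by
    rw [bern, PMF.toMeasure_apply_singleton _ _ (MeasurableSet.singleton _)]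
    simp [PMF.bernoulli_apply, hx, h0]
  have hf : (bern x {false}).toReal = 1 - x := by
    rw [bern, PMF.toMeasure_apply_singleton _ _ (MeasurableSet.singleton _)]
    simp only [PMF.bernoulli_apply, hx, Bool.cond_false]
    rw [ENNReal.coe_toReal, NNReal.coe_sub (Real.toNNReal_le_one.2 h1)]
    simp [h0]
  rw [integral_fintype Integrable.of_finite]
  simp only [measureReal_def]
  simp [Fintype.sum_bool, ht, hf, smul_eq_mul]

lemma isProbabilityMeasure_bind {A B : Type*} [MeasurableSpace A] [MeasurableSpace B]
    [Countable A] [MeasurableSingletonClass A]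
    (μ : Measure A) [IsProbabilityMeasure μ]
    (κ : A → Measure B) [∀ a, IsProbabilityMeasure (κ a)] :
    IsProbabilityMeasure (μ.bind κ) := by
  constructor
  rw [Measure.bind_apply MeasurableSet.univ (measurable_of_countable κ).aemeasurable]
  simp

lemma integral_bind_fintype {A B : Type*} [Fintype A] [Fintype B]
    [MeasurableSpace A] [MeasurableSpace B]
    [MeasurableSingletonClass A] [MeasurableSingletonClass B]
    (μ : Measure A) [IsProbabilityMeasure μ]
    (κ : A → Measure B) [∀ a, IsProbabilityMeasure (κ a)] (f : B → ℝ) :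
    ∫ b, f b ∂(μ.bind κ) = ∫ a, ∫ b, f b ∂(κ a) ∂μ := by
  have hκ : Measurable κ := measurable_of_countable κ
  haveI : IsProbabilityMeasure (μ.bind κ) := isProbabilityMeasure_bind μ κ
  rw [integral_fintype Integrable.of_finite,
      integral_fintype Integrable.of_finite]
  simp only [measureReal_def]
  have hb : ∀ b : B, ((μ.bind κ) {b}).toReal
      = ∑ a, (μ {a}).toReal * ((κ a) {b}).toReal := by
    intro b
    rw [Measure.bind_apply (measurableSet_singleton b) hκ.aemeasurable, lintegral_fintype,
        ENNReal.toReal_sum]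
    · refine Finset.sum_congr rfl fun a _ => ?_
      rw [ENNReal.toReal_mul, mul_comm]
    · intro a _
      exact ENNReal.mul_ne_top (measure_ne_top _ _) (measure_ne_top _ _)
  simp_rw [hb, Finset.sum_smul, smul_eq_mul]
  rw [Finset.sum_comm]
  refine Finset.sum_congr rfl fun a _ => ?_
  rw [integral_fintype Integrable.of_finite, Finset.mul_sum]
  simp only [measureReal_def]
  exact Finset.sum_congr rfl fun b _ => by rw [smul_eq_mul]; ring

lemma integral_pi_bool {ι : Type*} [Fintype ι] (μ : ι → Measure Bool)
    [∀ i, IsProbabilityMeasure (μ i)] (f : ι → Bool → ℝ) :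
    ∫ x, ∏ i, f i (x i) ∂(Measure.pi μ) = ∏ i, ∫ b, f i b ∂(μ i) := by
  exact MeasureTheory.integral_fintype_prod_eq_prod f

/-- For `0 ≤ ℓ ≤ k − 1`, `k ≥ 1` and `1 ≤ k − ℓ ≤ n/2`, and any finite nonempty set `α`
of pairs, the expectation of `χ_α = ∏_{(u,v)∈α} χ_{u,v}` under `B(k, n, ℓ, 1/2)` equals
`(ℓ/k)^L · ∏_v [(k−ℓ)/n + (1 − (k−ℓ)/n)·(−(k−ℓ)/(n−(k−ℓ)))^{d_v}]`, where `L` is the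
number of distinct left vertices of `α` and `d_v` the number of pairs of `α` incident
to the right vertex `v`; the product runs over the distinct right vertices of `α`. -/
theorem stmt_19 {k n ℓ : ℕ} (hk : 1 ≤ k) (hℓ : ℓ ≤ k - 1) (hkl : 1 ≤ k - ℓ)
    (hn : (k : ℝ) - ℓ ≤ (n : ℝ) / 2)
    (α : Finset (Fin k × Fin n)) (hα : α.Nonempty) :
    ∫ H, (∏ e ∈ α, (if H e then (1 : ℝ) else -1)) ∂ plantedModel k n ℓ =
      ((ℓ : ℝ) / k) ^ (α.image Prod.fst).card *
        ∏ v ∈ α.image Prod.snd,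
          (((k : ℝ) - ℓ) / n + (1 - ((k : ℝ) - ℓ) / n) *
            (-((k : ℝ) - ℓ) / ((n : ℝ) - ((k : ℝ) - ℓ)))
              ^ ((α.filter fun e => e.2 = v).card)) := by
  -- numeric preliminaries
  have hℓk : ℓ ≤ k := le_trans hℓ (Nat.sub_le k 1)
  have hK1 : (1 : ℝ) ≤ (k : ℝ) - ℓ := by
    have : ((1 : ℕ) : ℝ) ≤ ((k - ℓ : ℕ) : ℝ) := Nat.cast_le.2 hkl
    rw [Nat.cast_sub hℓk] at this
    simpa using this
  have hn2 : (2 : ℝ) ≤ n := by linarith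
  have hnpos : (0 : ℝ) < n := by linarith
  have hden : (0 : ℝ) < (n : ℝ) - ((k : ℝ) - ℓ) := by linarith
  have hkpos : (0 : ℝ) < k := by exact_mod_cast hk
  have hℓkR : (ℓ : ℝ) ≤ k := by exact_mod_cast hℓk
  have hs0 : 0 ≤ (ℓ : ℝ) / k := div_nonneg (Nat.cast_nonneg _) hkpos.le
  have hs1 : (ℓ : ℝ) / k ≤ 1 := by rw [div_le_one hkpos]; linarith
  have hp0 : 0 ≤ ((k : ℝ) - ℓ) / n := div_nonneg (by linarith) hnpos.le
  have hp1 : ((k : ℝ) - ℓ) / n ≤ 1 := by rw [div_le_one hnpos]; linarith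
  have hq0 : 0 ≤ ((n : ℝ) / 2 - ((k : ℝ) - ℓ)) / ((n : ℝ) - ((k : ℝ) - ℓ)) :=
    div_nonneg (by linarith) hden.le
  have hq1 : ((n : ℝ) / 2 - ((k : ℝ) - ℓ)) / ((n : ℝ) - ((k : ℝ) - ℓ)) ≤ 1 := by
    rw [div_le_one hden]; linarith
  -- unfold the model and split off the two binds
  haveI hinst : ∀ S : Fin k → Bool, IsProbabilityMeasure
      ((Measure.pi fun _ : Fin n => bern (((k : ℝ) - ℓ) / n)).bind fun P =>
        Measure.pi fun uv : Fin k × Fin n =>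
          bern (if S uv.1 then
                  (if P uv.2 then 1
                   else ((n : ℝ) / 2 - ((k : ℝ) - ℓ)) / ((n : ℝ) - ((k : ℝ) - ℓ)))
                else 1 / 2)) := fun S => _root_.isProbabilityMeasure_bind _ _
  rw [plantedModel, integral_bind_fintype]
  simp only [integral_bind_fintype]
  -- inner integral over the edge indicators
  have hInner : ∀ (S : Fin k → Bool) (P : Fin n → Bool),
      ∫ H : Fin k × Fin n → Bool, (∏ e ∈ α, (if H e then (1 : ℝ) else -1))
        ∂(Measure.pi fun uv : Fin k × Fin n =>
            bern (if S uv.1 then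
                    (if P uv.2 then 1
                     else ((n : ℝ) / 2 - ((k : ℝ) - ℓ)) / ((n : ℝ) - ((k : ℝ) - ℓ)))
                  else 1 / 2)) =
      (if ∀ u ∈ α.image Prod.fst, S u = true then (1 : ℝ) else 0) *
        ∏ v ∈ α.image Prod.snd,
          (if P v then (1 : ℝ)
           else (-((k : ℝ) - ℓ) / ((n : ℝ) - ((k : ℝ) - ℓ)))
             ^ ((α.filter fun e => e.2 = v).card)) := by
    intro S P
    have h1 : ∀ H : Fin k × Fin n → Bool,
        (∏ e ∈ α, (if H e then (1 : ℝ) else -1)) =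
        ∏ e : Fin k × Fin n, (if e ∈ α then (if H e then (1 : ℝ) else -1) else 1) := by
      intro H
      rw [Finset.prod_ite_mem, Finset.univ_inter]
    simp_rw [h1]
    rw [integral_pi_bool _ (fun e b => if e ∈ α then (if b then (1 : ℝ) else -1) else 1)]
    have h2 : ∀ e : Fin k × Fin n,
        ∫ b, (if e ∈ α then (if b then (1 : ℝ) else -1) else 1)
          ∂ bern (if S e.1 then
                    (if P e.2 then 1
                     else ((n : ℝ) / 2 - ((k : ℝ) - ℓ)) / ((n : ℝ) - ((k : ℝ) - ℓ)))
                  else 1 / 2) =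
        if e ∈ α then
          (if S e.1 then
            (if P e.2 then (1 : ℝ)
             else -((k : ℝ) - ℓ) / ((n : ℝ) - ((k : ℝ) - ℓ)))
          else 0)
        else 1 := by
      intro e
      by_cases he : e ∈ α
      · simp only [he, if_true]
        by_cases hS : S e.1 = true
        · by_cases hP : P e.2 = true
          · rw [if_pos hS, if_pos hS, if_pos hP, if_pos hP,
              integral_bern zero_le_one le_rfl]
            norm_num
          · rw [if_pos hS, if_pos hS, if_neg hP, if_neg hP, integral_bern hq0 hq1]
            norm_num
            field_simp
            ring
        · rw [if_neg hS, if_neg hS, integral_bern (by norm_num) (by norm_num)]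
          norm_num
      · simp only [he, if_false, integral_const, measure_univ, ENNReal.toReal_one, probReal_univ,
          one_smul]
    rw [Finset.prod_congr rfl fun e _ => h2 e, Finset.prod_ite_mem, Finset.univ_inter]
    have h3 : ∀ e ∈ α,
        (if S e.1 then
          (if P e.2 then (1 : ℝ)
           else -((k : ℝ) - ℓ) / ((n : ℝ) - ((k : ℝ) - ℓ)))
        else 0) =
        (if S e.1 then (1 : ℝ) else 0) *
          (if P e.2 then (1 : ℝ)
           else -((k : ℝ) - ℓ) / ((n : ℝ) - ((k : ℝ) - ℓ))) := by
      intro e _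
      by_cases h : S e.1 <;> simp [h]
    rw [Finset.prod_congr rfl h3, Finset.prod_mul_distrib]
    congr 1
    · rw [Finset.prod_boole]
      congr 1
      simp [Finset.forall_mem_image]
    · rw [← Finset.prod_fiberwise_of_maps_to
        (fun e he => Finset.mem_image_of_mem Prod.snd he)
        (fun e => if P e.2 then (1 : ℝ) else -((k : ℝ) - ℓ) / ((n : ℝ) - ((k : ℝ) - ℓ)))]
      refine Finset.prod_congr rfl fun v _ => ?_
      have : ∀ e ∈ α.filter (fun e => e.2 = v),
          (if P e.2 then (1 : ℝ) else -((k : ℝ) - ℓ) / ((n : ℝ) - ((k : ℝ) - ℓ))) =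
          (if P v then (1 : ℝ) else -((k : ℝ) - ℓ) / ((n : ℝ) - ((k : ℝ) - ℓ))) := by
        intro e he
        rw [(Finset.mem_filter.1 he).2]
      rw [Finset.prod_congr rfl this, Finset.prod_const]
      by_cases h : P v <;> simp [h]
  simp_rw [hInner]
  -- middle integral over P
  have hMid : ∀ S : Fin k → Bool,
      ∫ P : Fin n → Bool,
        ((if ∀ u ∈ α.image Prod.fst, S u = true then (1 : ℝ) else 0) *
          ∏ v ∈ α.image Prod.snd,
            (if P v then (1 : ℝ)
             else (-((k : ℝ) - ℓ) / ((n : ℝ) - ((k : ℝ) - ℓ)))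
               ^ ((α.filter fun e => e.2 = v).card)))
        ∂(Measure.pi fun _ : Fin n => bern (((k : ℝ) - ℓ) / n)) =
      (if ∀ u ∈ α.image Prod.fst, S u = true then (1 : ℝ) else 0) *
        ∏ v ∈ α.image Prod.snd,
          (((k : ℝ) - ℓ) / n + (1 - ((k : ℝ) - ℓ) / n) *
            (-((k : ℝ) - ℓ) / ((n : ℝ) - ((k : ℝ) - ℓ)))
              ^ ((α.filter fun e => e.2 = v).card)) := by
    intro S
    have h4 : ∀ P : Fin n → Bool,
        ∏ v ∈ α.image Prod.snd,
          (if P v then (1 : ℝ)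
           else (-((k : ℝ) - ℓ) / ((n : ℝ) - ((k : ℝ) - ℓ)))
             ^ ((α.filter fun e => e.2 = v).card)) =
        ∏ v : Fin n, (if v ∈ α.image Prod.snd then
          (if P v then (1 : ℝ)
           else (-((k : ℝ) - ℓ) / ((n : ℝ) - ((k : ℝ) - ℓ)))
             ^ ((α.filter fun e => e.2 = v).card)) else 1) := by
      intro P
      rw [Finset.prod_ite_mem, Finset.univ_inter]
    rw [integral_const_mul]
    congr 1
    simp_rw [h4]
    rw [integral_pi_bool _ (fun v b => if v ∈ α.image Prod.snd then
          (if b then (1 : ℝ)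
           else (-((k : ℝ) - ℓ) / ((n : ℝ) - ((k : ℝ) - ℓ)))
             ^ ((α.filter fun e => e.2 = v).card)) else 1)]
    have h5 : ∀ v : Fin n,
        ∫ b, (if v ∈ α.image Prod.snd then
          (if b then (1 : ℝ)
           else (-((k : ℝ) - ℓ) / ((n : ℝ) - ((k : ℝ) - ℓ)))
             ^ ((α.filter fun e => e.2 = v).card)) else 1)
          ∂ bern (((k : ℝ) - ℓ) / n) =
        if v ∈ α.image Prod.snd then
          (((k : ℝ) - ℓ) / n + (1 - ((k : ℝ) - ℓ) / n) *
            (-((k : ℝ) - ℓ) / ((n : ℝ) - ((k : ℝ) - ℓ)))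
              ^ ((α.filter fun e => e.2 = v).card)) else 1 := by
      intro v
      by_cases hv : v ∈ α.image Prod.snd
      · simp only [hv, if_true]
        rw [integral_bern hp0 hp1]
        norm_num
      · simp only [hv, if_false, integral_const, measure_univ, ENNReal.toReal_one, probReal_univ,
          one_smul]
    rw [Finset.prod_congr rfl fun v _ => h5 v, Finset.prod_ite_mem, Finset.univ_inter]
  simp_rw [hMid]
  -- outer integral over S
  rw [integral_mul_const]
  congr 1
  have h6 : ∀ S : Fin k → Bool,
      (if ∀ u ∈ α.image Prod.fst, S u = true then (1 : ℝ) else 0) =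
      ∏ u : Fin k, (if u ∈ α.image Prod.fst then (if S u then (1 : ℝ) else 0) else 1) := by
    intro S
    rw [Finset.prod_ite_mem, Finset.univ_inter, Finset.prod_boole]
    congr 1
  simp_rw [h6]
  rw [integral_pi_bool _ (fun u b => if u ∈ α.image Prod.fst then
        (if b then (1 : ℝ) else 0) else 1)]
  have h7 : ∀ u : Fin k,
      ∫ b, (if u ∈ α.image Prod.fst then (if b then (1 : ℝ) else 0) else 1)
        ∂ bern ((ℓ : ℝ) / k) =
      if u ∈ α.image Prod.fst then (ℓ : ℝ) / k else 1 := by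
    intro u
    by_cases hu : u ∈ α.image Prod.fst
    · simp only [hu, if_true]
      rw [integral_bern hs0 hs1]
      norm_num
    · simp only [hu, if_false, integral_const, measure_univ, ENNReal.toReal_one, probReal_univ,
        one_smul]
  rw [Finset.prod_congr rfl fun u _ => h7 u, Finset.prod_ite_mem, Finset.univ_inter,
      Finset.prod_const]
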